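/- Let Y be a compact abelian topological group and f : Y → ℝ a continuous function satisfying Δ_h^{n+1} f = 0 for all h ∈ Y (i.e., f is a continuous polynomial on Y). Then f is constant. -/

import Mathlib

/-- The finite difference operator `Δ_h f (y) = f (y + h) - f y`. -/
def finDiffR {Y : Type*} [AddCommGroup Y] (h : Y) (f : Y → ℝ) : Y → ℝ :=
  fun y => f (y + h) - f y

/-- Discrete difference operator on sequences. -/
private def dD (a : ℕ → ℝ) : ℕ → ℝ := fun m => a (m + 1) - a m

private lemma dD_sum {a : ℕ → ℝ} {c : ℝ} (h : ∀ m, dD a m = c) :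
    ∀ m, a m = a 0 + m * c := by
  intro m
  induction m with
  | zero => simp
  | succ k ih =>
    have := h k
    simp only [dD] at this
    push_cast
    linarith

private lemma bounded_poly_const : ∀ (n : ℕ) (a : ℕ → ℝ) (C : ℝ),
    (∀ m, |a m| ≤ C) → dD^[n + 1] a = 0 → dD a = 0 := by
  intro n
  induction n with
  | zero => intro a C _ h; simpa using h
  | succ k ih =>
    intro a C hC h
    have hDb : (∀ m, |dD a m| ≤ C + C) := by
      intro m
      calc |a (m + 1) - a m| ≤ |a (m+1)| + |a m| := abs_sub _ _
        _ ≤ C + C := add_le_add (hC _) (hC _)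
    have h' : dD^[k + 1] (dD a) = 0 := by
      rw [← Function.iterate_succ_apply]; exact h
    have hdd : dD (dD a) = 0 := ih (dD a) (C + C) hDb h'
    -- so dD a is constant, say c = dD a 0
    set c := dD a 0 with hc
    have hconst : ∀ m, dD a m = c := by
      intro m
      have := dD_sum (a := dD a) (c := (0 : ℝ)) (fun m => congrFun hdd m) m
      simpa using this
    have hlin : ∀ m : ℕ, a m = a 0 + m * c := dD_sum hconst
    have hc0 : c = 0 := by
      by_contra hne
      obtain ⟨m, hm⟩ := exists_nat_gt ((C + |a 0|) / |c|)
      have hcpos : 0 < |c| := abs_pos.mpr hne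
      have h1 : C + |a 0| < m * |c| := by
        rwa [div_lt_iff₀ hcpos] at hm
      have h2 : |a m| ≤ C := hC m
      have h3 : (m : ℝ) * |c| = |(m : ℝ) * c| := by
        rw [abs_mul, Nat.abs_cast]
      have h4 : |(m : ℝ) * c| ≤ |a m| + |a 0| := by
        have : (m : ℝ) * c = a m - a 0 := by rw [hlin m]; ring
        rw [this]
        exact abs_sub _ _
      rw [h3] at h1
      linarith
    funext m
    simpa [hc0] using hconst m

theorem stmt7 {Y : Type*} [AddCommGroup Y] [TopologicalSpace Y] [IsTopologicalAddGroup Y]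
    [CompactSpace Y] (f : Y → ℝ) (hf : Continuous f) (n : ℕ)
    (hpoly : ∀ h : Y, (finDiffR h)^[n + 1] f = 0) :
    ∀ y₁ y₂ : Y, f y₁ = f y₂ := by
  intro y₁ y₂
  set h := y₂ - y₁ with hh
  -- bound on f
  obtain ⟨z, -, hz⟩ := isCompact_univ.exists_isMaxOn (Set.univ_nonempty)
    (continuous_abs.comp hf).continuousOn
  set C := |f z| with hCdef
  have hC : ∀ y : Y, |f y| ≤ C := fun y => hz (Set.mem_univ y)
  -- the sequence along the cyclic direction h
  set a : ℕ → ℝ := fun m => f (y₁ + m • h) with ha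
  -- key commutation lemma
  have key : ∀ (k : ℕ) (g : Y → ℝ),
      dD^[k] (fun m => g (y₁ + m • h)) = fun m => ((finDiffR h)^[k] g) (y₁ + m • h) := by
    intro k
    induction k with
    | zero => intro g; rfl
    | succ j ih =>
      intro g
      rw [Function.iterate_succ_apply, Function.iterate_succ_apply]
      have : dD (fun m => g (y₁ + m • h)) = fun m => (finDiffR h g) (y₁ + m • h) := by
        funext m
        simp only [dD, finDiffR, succ_nsmul, add_assoc]
      rw [this, ih]
  have hDa : dD^[n + 1] a = 0 := by
    rw [ha, key (n + 1) f, hpoly h]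
    rfl
  have := bounded_poly_const n a C (fun m => hC _) hDa
  have h10 : a 1 = a 0 := by
    have := congrFun this 0
    simp only [dD, Pi.zero_apply] at this
    linarith
  simp only [ha, one_smul, zero_smul, add_zero, hh] at h10
  rw [add_sub_cancel] at h10
  exact h10.symm
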